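/- For all natural numbers k and n and every real number x, the k-th derivative of the function t ↦ (cos t)^n, evaluated at x, equals (1 / 2^n) · Σ_{r=0}^{n} C(n,r) · (2r − n)^k · cos(k·π/2 + (2r − n)·x), where C(n,r) is the binomial coefficient. -/

import Mathlib

open Real Finset

lemma cos_pow_expand (n : ℕ) (t : ℝ) :
    Real.cos t ^ n = (1 / 2 ^ n : ℝ) * ∑ r ∈ Finset.range (n + 1),
      (n.choose r : ℝ) * Real.cos ((2 * (r : ℝ) - (n : ℝ)) * t) := by
  have hexp : (2 : ℂ) * (Real.cos t : ℂ) =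
      Complex.exp ((t : ℂ) * Complex.I) + Complex.exp (-(t : ℂ) * Complex.I) := by
    rw [Complex.exp_mul_I, show (-(t:ℂ)) * Complex.I = ((-t : ℝ) : ℂ) * Complex.I by push_cast; ring,
      Complex.exp_mul_I]
    push_cast
    rw [Complex.cos_neg, Complex.sin_neg, ← Complex.ofReal_cos, ← Complex.ofReal_sin]
    ring
  have h2 : ((2 : ℂ) * (Real.cos t : ℂ)) ^ n = ∑ r ∈ Finset.range (n + 1),
      (n.choose r : ℂ) * Complex.exp ((((2 * (r : ℝ) - (n : ℝ)) * t : ℝ) : ℂ) * Complex.I) := by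
    rw [hexp, add_pow]
    refine Finset.sum_congr rfl fun r hr => ?_
    have hr' : r ≤ n := Nat.lt_succ_iff.mp (Finset.mem_range.mp hr)
    rw [← Complex.exp_nat_mul, ← Complex.exp_nat_mul, ← Complex.exp_add, mul_comm]
    congr 1
    push_cast [Nat.cast_sub hr']
    ring
  have h3 := congrArg Complex.re h2
  rw [show (2 : ℂ) * (Real.cos t : ℂ) = ((2 * Real.cos t : ℝ) : ℂ) by push_cast; ring,
    ← Complex.ofReal_pow, Complex.ofReal_re, Complex.re_sum] at h3
  simp only [Complex.mul_re, Complex.exp_ofReal_mul_I_re, Complex.exp_ofReal_mul_I_im,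
    Complex.natCast_re, Complex.natCast_im, zero_mul, sub_zero] at h3
  rw [mul_pow] at h3
  have h2n : (2 : ℝ) ^ n ≠ 0 := by positivity
  field_simp
  rw [mul_comm, h3]

theorem iteratedDeriv_real_cos_pow (k n : ℕ) (x : ℝ) :
    iteratedDeriv k (fun t : ℝ => Real.cos t ^ n) x =
      (1 / 2 ^ n : ℝ) *
        ∑ r ∈ Finset.range (n + 1),
          (n.choose r : ℝ) * (2 * (r : ℝ) - (n : ℝ)) ^ k *
            Real.cos ((k : ℝ) * (Real.pi / 2) + (2 * (r : ℝ) - (n : ℝ)) * x) := by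
  induction k generalizing x with
  | zero =>
    simp only [iteratedDeriv_zero, Nat.cast_zero, zero_mul, zero_add, pow_zero, mul_one]
    exact cos_pow_expand n x
  | succ k ih =>
    rw [iteratedDeriv_succ, funext ih]
    have hterm : ∀ r ∈ Finset.range (n + 1),
        HasDerivAt (fun y : ℝ => (n.choose r : ℝ) * (2 * (r : ℝ) - (n : ℝ)) ^ k *
            Real.cos ((k : ℝ) * (Real.pi / 2) + (2 * (r : ℝ) - (n : ℝ)) * y))
          ((n.choose r : ℝ) * (2 * (r : ℝ) - (n : ℝ)) ^ (k + 1) *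
            Real.cos (((k : ℕ) + 1 : ℝ) * (Real.pi / 2) + (2 * (r : ℝ) - (n : ℝ)) * x)) x := by
      intro r _
      set c : ℝ := 2 * (r : ℝ) - (n : ℝ)
      have h1 : HasDerivAt (fun y : ℝ => (k : ℝ) * (Real.pi / 2) + c * y) c x := by
        simpa using ((hasDerivAt_id x).const_mul c).const_add ((k : ℝ) * (Real.pi / 2))
      have h2 := (Real.hasDerivAt_cos ((k : ℝ) * (Real.pi / 2) + c * x)).comp x h1
      have h3 := h2.const_mul ((n.choose r : ℝ) * c ^ k)
      convert h3 using 1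
      · rfl
      · rfl
      · rfl
      have harg : ((k : ℕ) + 1 : ℝ) * (Real.pi / 2) + c * x =
          ((k : ℝ) * (Real.pi / 2) + c * x) + Real.pi / 2 := by ring
      rw [harg, Real.cos_add_pi_div_two]
      ring
    have hsum := (HasDerivAt.fun_sum hterm).const_mul (1 / 2 ^ n : ℝ)
    rw [hsum.deriv]
    push_cast
    ring
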